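/- For P ≥ 1 and real x with |x| ≤ 1/(2P), the magnitude of ∑_{p=0}^{P−1} e^{j2πxp} is at least 2P/π. In particular, the focusing sum is bounded below by a constant multiple of P whenever the Doppler mismatch satisfies |f_D − ν| < 1/(2Pτ). -/

import Mathlib

open Real Complex Finset

lemma abs_exp_mul_I_sub_one' (θ : ℝ) :
    ‖Complex.exp ((θ : ℂ) * Complex.I) - 1‖ = 2 * |Real.sin (θ / 2)| := by
  have hre : (Complex.exp ((θ : ℂ) * Complex.I) - 1).re = Real.cos θ - 1 := by
    simp [Complex.exp_ofReal_mul_I_re]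
  have him : (Complex.exp ((θ : ℂ) * Complex.I) - 1).im = Real.sin θ := by
    simp [Complex.exp_ofReal_mul_I_im]
  have hcos : Real.cos θ = 2 * Real.cos (θ / 2) ^ 2 - 1 := by
    rw [← Real.cos_two_mul]; congr 1; ring
  have hpyth := Real.sin_sq_add_cos_sq (θ / 2)
  have hns : Complex.normSq (Complex.exp ((θ : ℂ) * Complex.I) - 1)
      = (2 * |Real.sin (θ / 2)|) ^ 2 := by
    rw [Complex.normSq_apply, hre, him]
    have habs : |Real.sin (θ / 2)| ^ 2 = Real.sin (θ / 2) ^ 2 := sq_abs _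
    have hsin : Real.sin θ = 2 * Real.sin (θ / 2) * Real.cos (θ / 2) := by
      rw [← Real.sin_two_mul]; congr 1; ring
    rw [hsin]
    nlinarith [hcos, hpyth, habs]
  rw [Complex.norm_def, hns, Real.sqrt_sq (by positivity)]

lemma doppler_key (P : ℕ) (hP : 1 ≤ P) (x : ℝ) (hx0 : 0 ≤ x)
    (hx : x ≤ 1 / (2 * (P : ℝ))) :
    2 * (P : ℝ) / Real.pi ≤
      ‖∑ p ∈ Finset.range P,
        Complex.exp (((2 * Real.pi * (x * (p : ℝ))) : ℝ) * Complex.I)‖ := by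
  have hPpos : (0 : ℝ) < P := by exact_mod_cast hP
  have hP1 : (1 : ℝ) ≤ P := by exact_mod_cast hP
  have hpi := Real.pi_pos
  rcases eq_or_lt_of_le hx0 with h0 | hxpos
  · -- x = 0
    have : ∀ p ∈ Finset.range P,
        Complex.exp (((2 * Real.pi * (x * (p : ℝ))) : ℝ) * Complex.I) = 1 := by
      intro p _
      rw [← h0]
      norm_num
    rw [Finset.sum_congr rfl this, Finset.sum_const, Finset.card_range, nsmul_eq_mul,
      mul_one]
    have : ‖((P : ℂ))‖ = (P : ℝ) := by
      rw [Complex.norm_natCast]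
    rw [this]
    rw [div_le_iff₀ hpi]
    nlinarith [Real.pi_gt_three]
  · -- 0 < x
    have hx1 : x < 1 := by
      have : 1 / (2 * (P : ℝ)) ≤ 1 / 2 := by
        apply div_le_div_of_nonneg_left (by norm_num) (by norm_num)
        linarith
      linarith
    set z : ℂ := Complex.exp ((2 * Real.pi * x : ℝ) * Complex.I) with hz
    have hzp : ∀ p : ℕ, Complex.exp (((2 * Real.pi * (x * (p : ℝ))) : ℝ) * Complex.I)
        = z ^ p := by
      intro p
      rw [hz, ← Complex.exp_nat_mul]
      congr 1
      push_cast
      ring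
    have hzne : z ≠ 1 := by
      rw [hz]
      intro hcon
      rw [Complex.exp_eq_one_iff] at hcon
      obtain ⟨n, hn⟩ := hcon
      have him : (2 * Real.pi * x : ℝ) = (n : ℝ) * (2 * Real.pi) := by
        have := congrArg Complex.im hn
        simpa using this
      have hxn : x = (n : ℝ) := by
        have h2 : (2 * Real.pi) * x = (2 * Real.pi) * (n : ℝ) := by linarith
        exact mul_left_cancel₀ (by positivity) h2
      rcases lt_trichotomy n 0 with h | h | h
      · have : (n : ℝ) < 0 := by exact_mod_cast h
        linarith
      · rw [hxn, h] at hxpos; simp at hxpos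
      · have : (1 : ℤ) ≤ n := h
        have : (1 : ℝ) ≤ (n : ℝ) := by exact_mod_cast this
        linarith
    have hsum : (∑ p ∈ Finset.range P,
        Complex.exp (((2 * Real.pi * (x * (p : ℝ))) : ℝ) * Complex.I))
        = (z ^ P - 1) / (z - 1) := by
      rw [Finset.sum_congr rfl fun p _ => hzp p]
      exact geom_sum_eq hzne P
    have hzP : z ^ P = Complex.exp ((2 * Real.pi * ((P : ℝ) * x) : ℝ) * Complex.I) := by
      rw [hz, ← Complex.exp_nat_mul]
      congr 1
      push_cast
      ring
    rw [hsum, norm_div]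
    have habs1 : ‖z ^ P - 1‖ = 2 * |Real.sin (Real.pi * ((P : ℝ) * x))| := by
      rw [hzP, abs_exp_mul_I_sub_one']
      congr 2
      ring
    have habs2 : ‖z - 1‖ = 2 * |Real.sin (Real.pi * x)| := by
      rw [hz, abs_exp_mul_I_sub_one']
      congr 2
      ring
    rw [habs1, habs2]
    -- bounds on angles
    have hPxhalf : (P : ℝ) * x ≤ 1 / 2 := by
      have h1 := mul_le_mul_of_nonneg_left hx (le_of_lt hPpos)
      have h2 : (P : ℝ) * (1 / (2 * P)) = 1 / 2 := by field_simp
      linarith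
    have hPx2 : Real.pi * ((P : ℝ) * x) ≤ Real.pi / 2 := by nlinarith
    have hPx0 : 0 ≤ Real.pi * ((P : ℝ) * x) := by positivity
    have hx0' : 0 ≤ Real.pi * x := by positivity
    have hxpi : Real.pi * x ≤ Real.pi / 2 := by
      have hx2 : x ≤ 1 / 2 := by nlinarith
      nlinarith
    -- sin bounds
    have hsinPx : 2 / Real.pi * (Real.pi * ((P : ℝ) * x)) ≤ Real.sin (Real.pi * ((P : ℝ) * x)) :=
      Real.mul_le_sin hPx0 hPx2
    have hsinx_le : Real.sin (Real.pi * x) ≤ Real.pi * x := Real.sin_le hx0'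
    have hsinx_pos : 0 < Real.sin (Real.pi * x) := by
      apply Real.sin_pos_of_pos_of_lt_pi
      · positivity
      · nlinarith
    have hsinPx_pos0 : 0 ≤ Real.sin (Real.pi * ((P : ℝ) * x)) := by
      have : 0 < 2 / Real.pi * (Real.pi * ((P : ℝ) * x)) ∨
          0 = Real.pi * ((P : ℝ) * x) := by
        rcases eq_or_lt_of_le hPx0 with h | h
        · right; exact h
        · left; positivity
      rcases this with h | h
      · linarith
      · rw [← h] at hsinPx ⊢; simpa using hsinPx
    rw [_root_.abs_of_nonneg hsinPx_pos0, _root_.abs_of_nonneg hsinx_pos.le]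
    rw [mul_div_mul_left _ _ (by norm_num : (2:ℝ) ≠ 0)]
    rw [div_le_div_iff₀ hpi hsinx_pos]
    calc 2 * (P : ℝ) * Real.sin (Real.pi * x)
        ≤ 2 * (P : ℝ) * (Real.pi * x) := by nlinarith
      _ = (2 / Real.pi * (Real.pi * ((P : ℝ) * x))) * Real.pi := by field_simp
      _ ≤ Real.sin (Real.pi * ((P : ℝ) * x)) * Real.pi := by nlinarith

/-- For `P ≥ 1` and `|x| ≤ 1/(2P)`, the focusing sum `∑_{p=0}^{P-1} e^{j2πxp}`
has magnitude at least `2P/π`. -/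
theorem doppler_focusing_sum_lower_bound (P : ℕ) (hP : 1 ≤ P) (x : ℝ)
    (hx : |x| ≤ 1 / (2 * (P : ℝ))) :
    2 * (P : ℝ) / Real.pi ≤
      ‖∑ p ∈ Finset.range P,
        Complex.exp (((2 * Real.pi * (x * (p : ℝ))) : ℝ) * Complex.I)‖ := by
  rcases le_or_gt 0 x with hx0 | hx0
  · exact doppler_key P hP x hx0 ((_root_.abs_of_nonneg hx0) ▸ hx)
  · have hkey := doppler_key P hP (-x) (by linarith) (by rwa [abs_of_neg hx0] at hx)
    have hconj : (∑ p ∈ Finset.range P,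
          Complex.exp (((2 * Real.pi * (-x * (p : ℝ))) : ℝ) * Complex.I))
        = starRingEnd ℂ (∑ p ∈ Finset.range P,
          Complex.exp (((2 * Real.pi * (x * (p : ℝ))) : ℝ) * Complex.I)) := by
      rw [map_sum]
      apply Finset.sum_congr rfl
      intro p _
      rw [← Complex.exp_conj]
      congr 1
      simp [Complex.ext_iff]
    rw [hconj, Complex.norm_conj] at hkey
    exact hkey
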